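/- The three-qubit circuit consisting of: R_y(π/2) on q₀; R_y(π/2) on q₁; R_y(π/4) on q₂; CNOT with control q₁ targeting q₂; R_y(−π/2) on q₂; CNOT with control q₀ targeting q₂; R_y(π/4) on q₂ — applied to |000⟩ — produces the state √(2/8)|000⟩ − √(1/8)|100⟩ + √(1/8)|010⟩ + √(1/8)|101⟩ + √(1/8)|011⟩ + √(2/8)|111⟩ (qubit order q₀q₁q₂). -/
import Mathlib


open Matrix Kronecker Real

noncomputable def Ry (θ : ℝ) : Matrix (Fin 2) (Fin 2) ℝ :=
  !![Real.cos (θ/2), -Real.sin (θ/2); Real.sin (θ/2), Real.cos (θ/2)]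

/-- Basis indices for three qubits, in order `(q₀, q₁, q₂)`. -/
abbrev QIdx := Fin 2 × Fin 2 × Fin 2

/-- `R_y(θ)` on qubit `q₀`. -/
noncomputable def g0 (θ : ℝ) : Matrix QIdx QIdx ℝ :=
  Ry θ ⊗ₖ ((1 : Matrix (Fin 2) (Fin 2) ℝ) ⊗ₖ (1 : Matrix (Fin 2) (Fin 2) ℝ))

/-- `R_y(θ)` on qubit `q₁`. -/
noncomputable def g1 (θ : ℝ) : Matrix QIdx QIdx ℝ :=
  (1 : Matrix (Fin 2) (Fin 2) ℝ) ⊗ₖ (Ry θ ⊗ₖ (1 : Matrix (Fin 2) (Fin 2) ℝ))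

/-- `R_y(θ)` on qubit `q₂`. -/
noncomputable def g2 (θ : ℝ) : Matrix QIdx QIdx ℝ :=
  (1 : Matrix (Fin 2) (Fin 2) ℝ) ⊗ₖ ((1 : Matrix (Fin 2) (Fin 2) ℝ) ⊗ₖ Ry θ)

/-- CNOT with control `q₁`, target `q₂`: flips bit `q₂` when `q₁ = 1`. -/
def cnot12 : Matrix QIdx QIdx ℝ :=
  Matrix.of fun i j =>
    if i.1 = j.1 ∧ i.2.1 = j.2.1 ∧ i.2.2 = (if j.2.1 = 1 then j.2.2 + 1 else j.2.2)
    then 1 else 0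

/-- CNOT with control `q₀`, target `q₂`: flips bit `q₂` when `q₀ = 1`. -/
def cnot02 : Matrix QIdx QIdx ℝ :=
  Matrix.of fun i j =>
    if i.1 = j.1 ∧ i.2.1 = j.2.1 ∧ i.2.2 = (if j.1 = 1 then j.2.2 + 1 else j.2.2)
    then 1 else 0

/-- The ground state `|000⟩`. -/
def e000 : QIdx → ℝ := fun i => if i = (0, 0, 0) then 1 else 0

/-- Target state `√(2/8)|000⟩ − √(1/8)|100⟩ + √(1/8)|010⟩ + √(1/8)|101⟩ +
√(1/8)|011⟩ + √(2/8)|111⟩` (qubit order `q₀q₁q₂`). -/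
noncomputable def target : QIdx → ℝ := fun i =>
  if i = (0, 0, 0) then Real.sqrt (2/8)
  else if i = (1, 0, 0) then -Real.sqrt (1/8)
  else if i = (0, 1, 0) then Real.sqrt (1/8)
  else if i = (1, 0, 1) then Real.sqrt (1/8)
  else if i = (0, 1, 1) then Real.sqrt (1/8)
  else if i = (1, 1, 1) then Real.sqrt (2/8)
  else 0

noncomputable def vec8 (x0 x1 x2 x3 x4 x5 x6 x7 : ℝ) : QIdx → ℝ :=
  fun i => match i with
  | (0,0,0) => x0 | (0,0,1) => x1 | (0,1,0) => x2 | (0,1,1) => x3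
  | (1,0,0) => x4 | (1,0,1) => x5 | (1,1,0) => x6 | (1,1,1) => x7

noncomputable def cc : ℝ := Real.cos (π/8)
noncomputable def ss : ℝ := Real.sin (π/8)

lemma step1 : (g0 (π/2)).mulVec e000
    = vec8 (Real.sqrt 2/2) 0 0 0 (Real.sqrt 2/2) 0 0 0 := by
  funext ⟨a,b,c⟩
  fin_cases a <;> fin_cases b <;> fin_cases c <;>
    simp [g0, Ry, e000, vec8, Matrix.mulVec, dotProduct,
      Fintype.sum_prod_type, Fin.sum_univ_two, Matrix.one_apply] <;>
    norm_num [show (π/2/2 : ℝ) = π/4 from by ring, Real.cos_pi_div_four, Real.sin_pi_div_four]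

lemma step2 : (g1 (π/2)).mulVec (vec8 (Real.sqrt 2/2) 0 0 0 (Real.sqrt 2/2) 0 0 0)
    = vec8 (1/2) 0 (1/2) 0 (1/2) 0 (1/2) 0 := by
  funext ⟨a,b,c⟩
  fin_cases a <;> fin_cases b <;> fin_cases c <;>
    simp [g1, Ry, vec8, Matrix.mulVec, dotProduct,
      Fintype.sum_prod_type, Fin.sum_univ_two, Matrix.one_apply] <;>
    norm_num [show (π/2/2 : ℝ) = π/4 from by ring, Real.cos_pi_div_four,
      Real.sin_pi_div_four] <;>
    linear_combination 1/4 * Real.mul_self_sqrt (show (0:ℝ) ≤ 2 from by norm_num)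

lemma step3 : (g2 (π/4)).mulVec (vec8 (1/2) 0 (1/2) 0 (1/2) 0 (1/2) 0)
    = vec8 (cc/2) (ss/2) (cc/2) (ss/2) (cc/2) (ss/2) (cc/2) (ss/2) := by
  funext ⟨a,b,c⟩
  fin_cases a <;> fin_cases b <;> fin_cases c <;>
    simp [g2, Ry, vec8, cc, ss, Matrix.mulVec, dotProduct,
      Fintype.sum_prod_type, Fin.sum_univ_two, Matrix.one_apply,
      show (π/4/2 : ℝ) = π/8 from by ring] <;> ring

lemma step4 : cnot12.mulVec (vec8 (cc/2) (ss/2) (cc/2) (ss/2) (cc/2) (ss/2) (cc/2) (ss/2))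
    = vec8 (cc/2) (ss/2) (ss/2) (cc/2) (cc/2) (ss/2) (ss/2) (cc/2) := by
  funext ⟨a,b,c⟩
  fin_cases a <;> fin_cases b <;> fin_cases c <;>
    simp [cnot12, vec8, Matrix.mulVec, dotProduct,
      Fintype.sum_prod_type, Fin.sum_univ_two] <;> norm_num

lemma step5 : (g2 (-(π/2))).mulVec (vec8 (cc/2) (ss/2) (ss/2) (cc/2) (cc/2) (ss/2) (ss/2) (cc/2))
    = vec8 (Real.sqrt 2/4*(cc+ss)) (Real.sqrt 2/4*(ss-cc))
        (Real.sqrt 2/4*(ss+cc)) (Real.sqrt 2/4*(cc-ss))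
        (Real.sqrt 2/4*(cc+ss)) (Real.sqrt 2/4*(ss-cc))
        (Real.sqrt 2/4*(ss+cc)) (Real.sqrt 2/4*(cc-ss)) := by
  funext ⟨a,b,c⟩
  fin_cases a <;> fin_cases b <;> fin_cases c <;>
    simp [g2, Ry, vec8, Matrix.mulVec, dotProduct,
      Fintype.sum_prod_type, Fin.sum_univ_two, Matrix.one_apply,
      show (-(π/2)/2 : ℝ) = -(π/4) from by ring, Real.cos_pi_div_four,
      Real.sin_pi_div_four] <;> ring

lemma step6 : cnot02.mulVec (vec8 (Real.sqrt 2/4*(cc+ss)) (Real.sqrt 2/4*(ss-cc))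
        (Real.sqrt 2/4*(ss+cc)) (Real.sqrt 2/4*(cc-ss))
        (Real.sqrt 2/4*(cc+ss)) (Real.sqrt 2/4*(ss-cc))
        (Real.sqrt 2/4*(ss+cc)) (Real.sqrt 2/4*(cc-ss)))
    = vec8 (Real.sqrt 2/4*(cc+ss)) (Real.sqrt 2/4*(ss-cc))
        (Real.sqrt 2/4*(ss+cc)) (Real.sqrt 2/4*(cc-ss))
        (Real.sqrt 2/4*(ss-cc)) (Real.sqrt 2/4*(cc+ss))
        (Real.sqrt 2/4*(cc-ss)) (Real.sqrt 2/4*(ss+cc)) := by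
  funext ⟨a,b,c⟩
  fin_cases a <;> fin_cases b <;> fin_cases c <;>
    simp [cnot02, vec8, Matrix.mulVec, dotProduct,
      Fintype.sum_prod_type, Fin.sum_univ_two] <;> norm_num

lemma key_facts : cc^2 - ss^2 = Real.sqrt 2 / 2 ∧ 2*cc*ss = Real.sqrt 2 / 2 ∧
    Real.sqrt 2 * Real.sqrt 2 = 2 := by
  have h1 : Real.cos (π/4) = 2 * cc^2 - 1 := by
    rw [show (π/4 : ℝ) = 2 * (π/8) from by ring, Real.cos_two_mul]; rfl
  have h2 : Real.sin (π/4) = 2 * ss * cc := by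
    rw [show (π/4 : ℝ) = 2 * (π/8) from by ring, Real.sin_two_mul]; rfl
  have h3 : ss^2 + cc^2 = 1 := Real.sin_sq_add_cos_sq (π/8)
  have h4 : Real.sqrt 2 * Real.sqrt 2 = 2 := Real.mul_self_sqrt (by norm_num)
  rw [Real.cos_pi_div_four] at h1
  rw [Real.sin_pi_div_four] at h2
  refine ⟨by nlinarith, by nlinarith, h4⟩

lemma step7 : (g2 (π/4)).mulVec (vec8 (Real.sqrt 2/4*(cc+ss)) (Real.sqrt 2/4*(ss-cc))
        (Real.sqrt 2/4*(ss+cc)) (Real.sqrt 2/4*(cc-ss))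
        (Real.sqrt 2/4*(ss-cc)) (Real.sqrt 2/4*(cc+ss))
        (Real.sqrt 2/4*(cc-ss)) (Real.sqrt 2/4*(ss+cc)))
    = vec8 (1/2) 0 (Real.sqrt 2/4) (Real.sqrt 2/4)
        (-(Real.sqrt 2/4)) (Real.sqrt 2/4) 0 (1/2) := by
  obtain ⟨h1, h2, h3⟩ := key_facts
  have h0 : ss^2 + cc^2 = 1 := Real.sin_sq_add_cos_sq (π/8)
  simp only [cc, ss, Real.cos_pi_div_eight, Real.sin_pi_div_eight] at h0 h1 h2
  funext ⟨a,b,c⟩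
  fin_cases a <;> fin_cases b <;> fin_cases c <;>
    simp [g2, Ry, vec8, Matrix.mulVec, dotProduct,
      Fintype.sum_prod_type, Fin.sum_univ_two, Matrix.one_apply,
      show (π/4/2 : ℝ) = π/8 from by ring, cc, ss] <;>
    first
      | linear_combination Real.sqrt 2/4*h1 + Real.sqrt 2/4*h2 + 1/4*h3
      | linear_combination Real.sqrt 2/4*h2 - Real.sqrt 2/4*h1
      | linear_combination Real.sqrt 2/4*h1 - Real.sqrt 2/4*h2
      | linear_combination Real.sqrt 2/4*h0
      | linear_combination -(Real.sqrt 2/4)*h0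

lemma target_eq : target = vec8 (1/2) 0 (Real.sqrt 2/4) (Real.sqrt 2/4)
    (-(Real.sqrt 2/4)) (Real.sqrt 2/4) 0 (1/2) := by
  have h28 : Real.sqrt (2/8) = 1/2 := by
    rw [show (2/8 : ℝ) = (1/2)^2 from by norm_num, Real.sqrt_sq (by norm_num)]
  have h18 : Real.sqrt (1/8) = Real.sqrt 2 / 4 := by
    rw [show (1/8 : ℝ) = 2/4^2 from by norm_num, show (2:ℝ)/4^2 = 2 * (1/4)^2 from by norm_num,
      Real.sqrt_mul (by norm_num), Real.sqrt_sq (by norm_num)]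
    ring
  have h8 : (Real.sqrt 8)⁻¹ = Real.sqrt 2 / 4 := by
    rw [show (8:ℝ) = 2 * 2^2 from by norm_num, Real.sqrt_mul (by norm_num), Real.sqrt_sq (by norm_num)]
    have h2 : Real.sqrt 2 * Real.sqrt 2 = 2 := Real.mul_self_sqrt (by norm_num)
    have hne : Real.sqrt 2 ≠ 0 := by positivity
    field_simp
    nlinarith [h2]
  funext ⟨a,b,c⟩
  fin_cases a <;> fin_cases b <;> fin_cases c <;>
    simp [target, vec8, h28, h18, h8, Prod.ext_iff] <;> norm_num

/-- The circuit of Figure 1(c) prepares the target state of Equation 4. -/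
theorem circuit_prepares_target :
    (g2 (π/4) * cnot02 * g2 (-(π/2)) * cnot12 * g2 (π/4) * g1 (π/2) * g0 (π/2)).mulVec e000
      = target := by
  simp only [← Matrix.mulVec_mulVec]
  rw [step1, step2, step3, step4, step5, step6, step7, target_eq]
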